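/- Let F be a nonempty face of the Minkowski sum P = P_1 + ... + P_r of polytopes in R^d with decomposition F = F_1 + ... + F_r. If the decomposition is exact (dim F = ∑ dim F_i), then for every tuple (G_1, ..., G_r) with G_i a nonempty face of F_i, the set G_1 + ... + G_r is a face of F, and the decomposition of every face of F is exact. -/

import Mathlib

open Set
open scoped Pointwise

open Module

set_option linter.unusedSectionVars false
set_option linter.unusedVariables false
set_option maxHeartbeats 1000000

section helpers
variable {E : Type*} [NormedAddCommGroup E] [NormedSpace ℝ E] {ι : Type*}

lemma sum_nonempty (s : Finset ι) (X : ι → Set E) (h : ∀ i ∈ s, (X i).Nonempty) :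
    (∑ i ∈ s, X i).Nonempty := by
  classical
  refine ⟨∑ i ∈ s, (fun j => if hj : j ∈ s then (h j hj).choose else 0) i, ?_⟩
  apply Set.finset_sum_mem_finset_sum
  intro i hi
  simp only [dif_pos hi]
  exact (h i hi).choose_spec

lemma toExposed_add (l : E →L[ℝ] ℝ) {A B : Set E}
    (hA : (l.toExposed A).Nonempty) (hB : (l.toExposed B).Nonempty) :
    l.toExposed (A + B) = l.toExposed A + l.toExposed B := by
  obtain ⟨a₀, ha₀A, ha₀⟩ := hA
  obtain ⟨b₀, hb₀B, hb₀⟩ := hB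
  ext x
  constructor
  · rintro ⟨hx, hmax⟩
    obtain ⟨a, ha, b, hb, rfl⟩ := Set.mem_add.1 hx
    have hab := hmax (a₀ + b₀) (Set.add_mem_add ha₀A hb₀B)
    have h2 := ha₀ a ha
    have h3 := hb₀ b hb
    simp only [map_add] at hab
    have hla : l a = l a₀ := by linarith
    have hlb : l b = l b₀ := by linarith
    exact Set.add_mem_add ⟨ha, fun y hy => hla ▸ (ha₀ y hy)⟩
      ⟨hb, fun y hy => hlb ▸ (hb₀ y hy)⟩
  · rintro ⟨a, ⟨haA, hamax⟩, b, ⟨hbB, hbmax⟩, rfl⟩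
    refine ⟨Set.add_mem_add haA hbB, ?_⟩
    rintro y hy
    obtain ⟨a', ha', b', hb', rfl⟩ := Set.mem_add.1 hy
    simp only [map_add]
    exact add_le_add (hamax a' ha') (hbmax b' hb')

lemma toExposed_zero (l : E →L[ℝ] ℝ) : l.toExposed (0 : Set E) = 0 := by
  ext x
  simp only [ContinuousLinearMap.toExposed, Set.mem_setOf_eq, Set.mem_zero]
  constructor
  · rintro ⟨h, -⟩; exact h
  · rintro rfl
    exact ⟨rfl, by rintro y hy; subst hy; exact le_refl _⟩

lemma toExposed_sum (l : E →L[ℝ] ℝ) (s : Finset ι) (X : ι → Set E)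
    (h : ∀ i ∈ s, (l.toExposed (X i)).Nonempty) :
    l.toExposed (∑ i ∈ s, X i) = ∑ i ∈ s, l.toExposed (X i) := by
  classical
  induction s using Finset.induction_on with
  | empty => simpa using toExposed_zero l
  | @insert i s his ih =>
    have hs' : ∀ j ∈ s, (l.toExposed (X j)).Nonempty :=
      fun j hj => h j (Finset.mem_insert_of_mem hj)
    have ihe := ih hs'
    rw [Finset.sum_insert his, Finset.sum_insert his,
      toExposed_add l (h i (Finset.mem_insert_self i s))
        (by rw [ihe]; exact sum_nonempty s _ hs'), ihe]

lemma vectorSpan_add {A B : Set E} (hA : A.Nonempty) (hB : B.Nonempty) :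
    vectorSpan ℝ (A + B) = vectorSpan ℝ A ⊔ vectorSpan ℝ B := by
  obtain ⟨a₀, ha₀⟩ := hA
  obtain ⟨b₀, hb₀⟩ := hB
  apply le_antisymm
  · rw [vectorSpan, Submodule.span_le]
    rintro v ⟨x, hx, y, hy, rfl⟩
    obtain ⟨a, ha, b, hb, rfl⟩ := Set.mem_add.1 hx
    obtain ⟨a', ha', b', hb', rfl⟩ := Set.mem_add.1 hy
    show (a + b) -ᵥ (a' + b') ∈ vectorSpan ℝ A ⊔ vectorSpan ℝ B
    have heq : (a + b) -ᵥ (a' + b') = (a -ᵥ a') + (b -ᵥ b') := by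
      simp only [vsub_eq_sub]; abel
    rw [heq]
    exact Submodule.add_mem _
      (Submodule.mem_sup_left (vsub_mem_vectorSpan ℝ ha ha'))
      (Submodule.mem_sup_right (vsub_mem_vectorSpan ℝ hb hb'))
  · refine sup_le ?_ ?_
    · rw [vectorSpan, Submodule.span_le]
      rintro v ⟨a, ha, a', ha', rfl⟩
      show a -ᵥ a' ∈ vectorSpan ℝ (A + B)
      have heq : a -ᵥ a' = (a + b₀) -ᵥ (a' + b₀) := by simp [vsub_eq_sub]
      rw [heq]
      exact vsub_mem_vectorSpan ℝ (Set.add_mem_add ha hb₀) (Set.add_mem_add ha' hb₀)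
    · rw [vectorSpan, Submodule.span_le]
      rintro v ⟨b, hb, b', hb', rfl⟩
      show b -ᵥ b' ∈ vectorSpan ℝ (A + B)
      have heq : b -ᵥ b' = (a₀ + b) -ᵥ (a₀ + b') := by simp [vsub_eq_sub]
      rw [heq]
      exact vsub_mem_vectorSpan ℝ (Set.add_mem_add ha₀ hb) (Set.add_mem_add ha₀ hb')

lemma vectorSpan_zero : vectorSpan ℝ (0 : Set E) = ⊥ := by
  rw [show (0 : Set E) = {0} from rfl]
  exact vectorSpan_singleton ℝ 0

lemma vectorSpan_sum (s : Finset ι) (X : ι → Set E) (h : ∀ i ∈ s, (X i).Nonempty) :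
    vectorSpan ℝ (∑ i ∈ s, X i) = ⨆ i ∈ s, vectorSpan ℝ (X i) := by
  classical
  induction s using Finset.induction_on with
  | empty => simpa using vectorSpan_zero
  | @insert i s his ih =>
    rw [Finset.sum_insert his, Finset.iSup_insert,
      vectorSpan_add (h i (Finset.mem_insert_self i s))
        (sum_nonempty s _ (fun j hj => h j (Finset.mem_insert_of_mem hj))),
      ih (fun j hj => h j (Finset.mem_insert_of_mem hj))]

end helpers

section finrankLemmas
variable {K : Type*} {V : Type*} [Field K] [AddCommGroup V] [Module K V]
  [FiniteDimensional K V] {ι : Type*}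

lemma finrank_sup_le' (p q : Submodule K V) :
    finrank K ↥(p ⊔ q) ≤ finrank K p + finrank K q := by
  have := Submodule.finrank_sup_add_finrank_inf_eq p q
  omega

lemma finrank_biSup_le (s : Finset ι) (W : ι → Submodule K V) :
    finrank K ↥(⨆ i ∈ s, W i) ≤ ∑ i ∈ s, finrank K (W i) := by
  classical
  induction s using Finset.induction_on with
  | empty => simp
  | @insert i s his ih =>
    rw [Finset.iSup_insert, Finset.sum_insert his]
    exact le_trans (finrank_sup_le' _ _) (by omega)

lemma exact_split (s : Finset ι) {i : ι} (his : i ∉ s) (W : ι → Submodule K V)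
    (h : finrank K ↥(W i ⊔ ⨆ j ∈ s, W j) = finrank K (W i) + ∑ j ∈ s, finrank K (W j)) :
    finrank K ↥(⨆ j ∈ s, W j) = ∑ j ∈ s, finrank K (W j) ∧ W i ⊓ (⨆ j ∈ s, W j) = ⊥ := by
  have h1 := finrank_biSup_le s W
  have h2 := Submodule.finrank_sup_add_finrank_inf_eq (W i) (⨆ j ∈ s, W j)
  have h3 : finrank K ↥(W i ⊓ ⨆ j ∈ s, W j) = 0 := by omega
  exact ⟨by omega, Submodule.finrank_eq_zero.1 h3⟩

lemma exact_subfamily (s : Finset ι) (W V' : ι → Submodule K V)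
    (hle : ∀ i ∈ s, W i ≤ V' i)
    (h : finrank K ↥(⨆ i ∈ s, V' i) = ∑ i ∈ s, finrank K (V' i)) :
    finrank K ↥(⨆ i ∈ s, W i) = ∑ i ∈ s, finrank K (W i) := by
  classical
  induction s using Finset.induction_on with
  | empty => simp
  | @insert i s his ih =>
    rw [Finset.iSup_insert, Finset.sum_insert his] at h ⊢
    obtain ⟨hV, hdisj⟩ := exact_split s his V' h
    have hWdisj : W i ⊓ (⨆ j ∈ s, W j) = ⊥ := by
      refine le_antisymm (le_trans ?_ hdisj.le) bot_le
      exact inf_le_inf (hle i (Finset.mem_insert_self i s))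
        (iSup_le fun j => iSup_le fun hj =>
          le_trans (hle j (Finset.mem_insert_of_mem hj)) (le_biSup _ hj))
    have h2 := Submodule.finrank_sup_add_finrank_inf_eq (W i) (⨆ j ∈ s, W j)
    rw [hWdisj] at h2
    simp only [finrank_bot, add_zero] at h2
    rw [h2, ih (fun j hj => hle j (Finset.mem_insert_of_mem hj)) hV]

end finrankLemmas

section glue
variable {E : Type*} [NormedAddCommGroup E] [NormedSpace ℝ E] [FiniteDimensional ℝ E]

lemma exists_functional_glue {p q : Submodule ℝ E} (hpq : p ⊓ q = ⊥)
    (l₁ l₂ : E →L[ℝ] ℝ) :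
    ∃ l : E →L[ℝ] ℝ, (∀ v ∈ p, l v = l₁ v) ∧ (∀ v ∈ q, l v = l₂ v) := by
  classical
  set S : Submodule ℝ E := p ⊔ q with hS
  set p' : Submodule ℝ S := p.comap S.subtype with hp'
  set q' : Submodule ℝ S := q.comap S.subtype with hq'
  have hcompl : IsCompl p' q' := by
    constructor
    · rw [disjoint_iff]
      ext x
      simp only [Submodule.mem_inf, Submodule.mem_comap, Submodule.mem_bot, hp', hq']
      constructor
      · rintro ⟨h1, h2⟩
        have : (x : E) ∈ p ⊓ q := ⟨h1, h2⟩
        rw [hpq, Submodule.mem_bot] at this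
        exact Subtype.ext this
      · rintro rfl; simp
    · rw [codisjoint_iff, eq_top_iff]
      rintro ⟨x, hx⟩ -
      obtain ⟨a, ha, b, hb, hab⟩ := Submodule.mem_sup.1 hx
      have haS : a ∈ S := Submodule.mem_sup_left ha
      have hbS : b ∈ S := Submodule.mem_sup_right hb
      refine Submodule.mem_sup.2 ⟨⟨a, haS⟩, ha, ⟨b, hbS⟩, hb, ?_⟩
      exact Subtype.ext hab
  set φ : S →ₗ[ℝ] ℝ :=
    LinearMap.ofIsCompl hcompl
      (l₁.toLinearMap ∘ₗ S.subtype ∘ₗ p'.subtype)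
      (l₂.toLinearMap ∘ₗ S.subtype ∘ₗ q'.subtype) with hφ
  obtain ⟨T, hT⟩ := Submodule.exists_isCompl S
  set l' : E →ₗ[ℝ] ℝ := LinearMap.ofIsCompl hT φ 0 with hl'
  refine ⟨LinearMap.toContinuousLinearMap l', ?_, ?_⟩
  · intro v hv
    have hvS : v ∈ S := Submodule.mem_sup_left hv
    have e1 : l' v = φ (⟨v, hvS⟩ : S) :=
      LinearMap.ofIsCompl_left_apply (φ := φ) (ψ := (0 : T →ₗ[ℝ] ℝ)) hT ⟨v, hvS⟩
    have e2 : φ (⟨v, hvS⟩ : S) = l₁ v := by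
      have hv' : (⟨v, hvS⟩ : S) ∈ p' := hv
      have := LinearMap.ofIsCompl_left_apply
        (φ := l₁.toLinearMap ∘ₗ S.subtype ∘ₗ p'.subtype)
        (ψ := l₂.toLinearMap ∘ₗ S.subtype ∘ₗ q'.subtype) hcompl (⟨⟨v, hvS⟩, hv'⟩ : p')
      rw [hφ]
      exact this
    simp only [LinearMap.coe_toContinuousLinearMap']
    rw [e1, e2]
  · intro v hv
    have hvS : v ∈ S := Submodule.mem_sup_right hv
    have e1 : l' v = φ (⟨v, hvS⟩ : S) :=
      LinearMap.ofIsCompl_left_apply (φ := φ) (ψ := (0 : T →ₗ[ℝ] ℝ)) hT ⟨v, hvS⟩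
    have e2 : φ (⟨v, hvS⟩ : S) = l₂ v := by
      have hv' : (⟨v, hvS⟩ : S) ∈ q' := hv
      have := LinearMap.ofIsCompl_right_apply
        (φ := l₁.toLinearMap ∘ₗ S.subtype ∘ₗ p'.subtype)
        (ψ := l₂.toLinearMap ∘ₗ S.subtype ∘ₗ q'.subtype) hcompl (⟨⟨v, hvS⟩, hv'⟩ : q')
      rw [hφ]
      exact this
    simp only [LinearMap.coe_toContinuousLinearMap']
    rw [e1, e2]

end glue

section part3
variable {E : Type*} [NormedAddCommGroup E] [NormedSpace ℝ E] {ι : Type*}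

lemma toExposed_congr {l l₁ : E →L[ℝ] ℝ} {A : Set E}
    (h : ∀ v ∈ vectorSpan ℝ A, l v = l₁ v) :
    l.toExposed A = l₁.toExposed A := by
  have key : ∀ x ∈ A, ∀ y ∈ A, l y - l x = l₁ y - l₁ x := by
    intro x hx y hy
    have hmem : y - x ∈ vectorSpan ℝ A := by
      have := vsub_mem_vectorSpan ℝ hy hx
      rwa [vsub_eq_sub] at this
    have := h _ hmem
    simp only [map_sub] at this
    linarith
  ext x
  constructor
  · rintro ⟨hx, hmax⟩
    exact ⟨hx, fun y hy => by have := key x hx y hy; have := hmax y hy; linarith⟩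
  · rintro ⟨hx, hmax⟩
    exact ⟨hx, fun y hy => by have := key x hx y hy; have := hmax y hy; linarith⟩

variable [FiniteDimensional ℝ E]

lemma exists_exposing (s : Finset ι) (Fa G : ι → Set E)
    (hFa : ∀ i ∈ s, (Fa i).Nonempty)
    (hGne : ∀ i ∈ s, (G i).Nonempty)
    (hG : ∀ i ∈ s, IsExposed ℝ (Fa i) (G i))
    (hex : finrank ℝ ↥(vectorSpan ℝ (∑ i ∈ s, Fa i)) =
      ∑ i ∈ s, finrank ℝ ↥(vectorSpan ℝ (Fa i))) :
    ∃ l : E →L[ℝ] ℝ, l.toExposed (∑ i ∈ s, Fa i) = ∑ i ∈ s, G i := by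
  classical
  induction s using Finset.induction_on with
  | empty => exact ⟨0, by simpa using toExposed_zero (0 : E →L[ℝ] ℝ)⟩
  | @insert i s his ih =>
    have hFa' : ∀ j ∈ s, (Fa j).Nonempty := fun j hj => hFa j (Finset.mem_insert_of_mem hj)
    have hGne' : ∀ j ∈ s, (G j).Nonempty := fun j hj => hGne j (Finset.mem_insert_of_mem hj)
    have hG' : ∀ j ∈ s, IsExposed ℝ (Fa j) (G j) := fun j hj => hG j (Finset.mem_insert_of_mem hj)
    have hBne : (∑ j ∈ s, Fa j).Nonempty := sum_nonempty s _ hFa'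
    have hAne : (Fa i).Nonempty := hFa i (Finset.mem_insert_self i s)
    have hvs : vectorSpan ℝ (∑ j ∈ s, Fa j) = ⨆ j ∈ s, vectorSpan ℝ (Fa j) :=
      vectorSpan_sum s Fa hFa'
    rw [Finset.sum_insert his, Finset.sum_insert his] at hex ⊢
    rw [vectorSpan_add hAne hBne, hvs] at hex
    obtain ⟨hVeq, hdisj⟩ := exact_split s his (fun j => vectorSpan ℝ (Fa j)) hex
    rw [← hvs] at hVeq hdisj
    obtain ⟨l₂, hl₂⟩ := ih hFa' hGne' hG' hVeq
    obtain ⟨l₁, hl₁⟩ := hG i (Finset.mem_insert_self i s) (hGne i (Finset.mem_insert_self i s))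
    obtain ⟨l, hlp, hlq⟩ := exists_functional_glue hdisj l₁ l₂
    refine ⟨l, ?_⟩
    have e1 : l.toExposed (Fa i) = G i := by
      rw [toExposed_congr (l₁ := l₁) hlp]
      exact hl₁.symm
    have e2 : l.toExposed (∑ j ∈ s, Fa j) = ∑ j ∈ s, G j := by
      rw [toExposed_congr (l₁ := l₂) hlq]
      exact hl₂
    rw [toExposed_add l (e1 ▸ hGne i (Finset.mem_insert_self i s))
      (e2 ▸ sum_nonempty s _ hGne'), e1, e2]

lemma comp_subset_toExposed (s : Finset ι) (X Pa : ι → Set E) (l : E →L[ℝ] ℝ)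
    (hXP : ∀ i ∈ s, X i ⊆ Pa i) (hXne : ∀ i ∈ s, (X i).Nonempty)
    (hsub : (∑ i ∈ s, X i) ⊆ l.toExposed (∑ i ∈ s, Pa i)) :
    ∀ i ∈ s, X i ⊆ l.toExposed (Pa i) := by
  classical
  intro i hi x hx
  set g : ι → E := fun j => if hj : j ∈ s then (hXne j hj).choose else 0 with hg
  have hgmem : ∀ j ∈ s, g j ∈ X j := by
    intro j hj
    simp only [hg, dif_pos hj]
    exact (hXne j hj).choose_spec
  set f : ι → E := Function.update g i x with hf
  have hfmem : ∀ j ∈ s, f j ∈ X j := by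
    intro j hj
    rcases eq_or_ne j i with rfl | hne
    · simpa [hf] using hx
    · simpa [hf, Function.update_of_ne hne] using hgmem j hj
  have hz : (∑ j ∈ s, f j) ∈ ∑ j ∈ s, X j :=
    Set.finset_sum_mem_finset_sum s X f hfmem
  obtain ⟨hzmem, hzmax⟩ := hsub hz
  refine ⟨hXP i hi hx, ?_⟩
  intro y hy
  have hz' : (∑ j ∈ s, (Function.update f i y) j) ∈ ∑ j ∈ s, Pa j := by
    apply Set.finset_sum_mem_finset_sum
    intro j hj
    rcases eq_or_ne j i with rfl | hne
    · simpa using hy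
    · simpa [Function.update_of_ne hne] using hXP j hj (hfmem j hj)
  have hle := hzmax _ hz'
  have hs1 : ∑ j ∈ s, (Function.update f i y) j = y + ∑ j ∈ s.erase i, f j := by
    rw [Finset.sum_update_of_mem hi f y, Finset.sdiff_singleton_eq_erase]
  have hs2 : ∑ j ∈ s, f j = x + ∑ j ∈ s.erase i, f j := by
    have := Finset.add_sum_erase s f hi
    rw [← this, hf, Function.update_self]
  rw [hs1, hs2] at hle
  simp only [map_add] at hle
  linarith
end part3
section part4
variable {E : Type*} [NormedAddCommGroup E] [NormedSpace ℝ E] {ι : Type*}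

noncomputable def sfn (A : Set E) (l : E →L[ℝ] ℝ) : ℝ := sSup (l '' A)

lemma sfn_bdd {A : Set E} (hA : IsCompact A) (l : E →L[ℝ] ℝ) : BddAbove (l '' A) :=
  (hA.image l.continuous).bddAbove

lemma sfn_add {A B : Set E} (hA : IsCompact A) (hB : IsCompact B)
    (hAne : A.Nonempty) (hBne : B.Nonempty) (l : E →L[ℝ] ℝ) :
    sfn (A + B) l = sfn A l + sfn B l := by
  have himg : l '' (A + B) = l '' A + l '' B := by
    ext r
    constructor
    · rintro ⟨x, hx, rfl⟩
      obtain ⟨a, ha, b, hb, rfl⟩ := Set.mem_add.1 hx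
      rw [map_add]
      exact Set.add_mem_add (Set.mem_image_of_mem l ha) (Set.mem_image_of_mem l hb)
    · rintro ⟨p, ⟨a, ha, rfl⟩, q, ⟨b, hb, rfl⟩, rfl⟩
      exact ⟨a + b, Set.add_mem_add ha hb, map_add l a b⟩
  rw [sfn, himg, csSup_add (hAne.image l) (sfn_bdd hA l) (hBne.image l) (sfn_bdd hB l)]
  rfl

lemma sum_compact (s : Finset ι) (X : ι → Set E) (h : ∀ i ∈ s, IsCompact (X i)) :
    IsCompact (∑ i ∈ s, X i) := by
  classical
  induction s using Finset.induction_on with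
  | empty =>
    rw [Finset.sum_empty, show (0 : Set E) = {0} from rfl]
    exact isCompact_singleton
  | @insert i s his ih =>
    rw [Finset.sum_insert his]
    exact (h i (Finset.mem_insert_self i s)).add
      (ih (fun j hj => h j (Finset.mem_insert_of_mem hj)))

lemma sfn_sum (s : Finset ι) (X : ι → Set E) (hc : ∀ i ∈ s, IsCompact (X i))
    (hne : ∀ i ∈ s, (X i).Nonempty) (l : E →L[ℝ] ℝ) :
    sfn (∑ i ∈ s, X i) l = ∑ i ∈ s, sfn (X i) l := by
  classical
  induction s using Finset.induction_on with
  | empty =>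
    simp only [Finset.sum_empty]
    rw [sfn, show (0 : Set E) = {0} from rfl]
    simp
  | @insert i s his ih =>
    rw [Finset.sum_insert his, Finset.sum_insert his,
      sfn_add (hc i (Finset.mem_insert_self i s))
        (sum_compact s X (fun j hj => hc j (Finset.mem_insert_of_mem hj)))
        (hne i (Finset.mem_insert_self i s))
        (sum_nonempty s X (fun j hj => hne j (Finset.mem_insert_of_mem hj))) l,
      ih (fun j hj => hc j (Finset.mem_insert_of_mem hj))
        (fun j hj => hne j (Finset.mem_insert_of_mem hj))]

lemma cancellation (s : Finset ι) (X Y : ι → Set E)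
    (hcX : ∀ i ∈ s, IsCompact (X i)) (hneX : ∀ i ∈ s, (X i).Nonempty)
    (hconvX : ∀ i ∈ s, Convex ℝ (X i))
    (hcY : ∀ i ∈ s, IsCompact (Y i)) (hneY : ∀ i ∈ s, (Y i).Nonempty)
    (hXY : ∀ i ∈ s, X i ⊆ Y i)
    (hsum : (∑ i ∈ s, X i) = ∑ i ∈ s, Y i) :
    ∀ i ∈ s, X i = Y i := by
  have key : ∀ l : E →L[ℝ] ℝ, ∀ i ∈ s, sfn (X i) l = sfn (Y i) l := by
    intro l
    have h1 : ∑ i ∈ s, sfn (X i) l = ∑ i ∈ s, sfn (Y i) l := by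
      rw [← sfn_sum s X hcX hneX l, ← sfn_sum s Y hcY hneY l, hsum]
    have h2 : ∀ i ∈ s, sfn (X i) l ≤ sfn (Y i) l := fun i hi =>
      csSup_le_csSup (sfn_bdd (hcY i hi) l) ((hneX i hi).image l)
        (Set.image_mono (hXY i hi))
    exact (Finset.sum_eq_sum_iff_of_le h2).1 h1
  intro i hi
  refine Set.Subset.antisymm (hXY i hi) ?_
  intro y hy
  by_contra hyX
  obtain ⟨f, u, hfu, huy⟩ :=
    geometric_hahn_banach_closed_point (hconvX i hi) (hcX i hi).isClosed hyX
  have h1 : sfn (X i) f ≤ u := by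
    apply csSup_le ((hneX i hi).image f)
    rintro r ⟨a, ha, rfl⟩
    exact (hfu a ha).le
  have h2 : f y ≤ sfn (Y i) f := le_csSup (sfn_bdd (hcY i hi) f) ⟨y, hy, rfl⟩
  have h3 := key f i hi
  linarith
end part4
abbrev Euc (d : ℕ) := EuclideanSpace ℝ (Fin d)

def IsPolytope {d : ℕ} (P : Set (Euc d)) : Prop :=
  ∃ V : Finset (Euc d), P = convexHull ℝ ↑V

def IsFaceOf {d : ℕ} (P F : Set (Euc d)) : Prop :=
  F.Nonempty ∧ IsExposed ℝ P F

noncomputable def pdim {d : ℕ} (F : Set (Euc d)) : ℕ :=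
  Module.finrank ℝ (affineSpan ℝ F).direction

noncomputable def fCount {d : ℕ} (k : ℕ) (P : Set (Euc d)) : ℕ :=
  Nat.card {F : Set (Euc d) // IsFaceOf P F ∧ pdim F = k}

def normalCone {d : ℕ} (P F : Set (Euc d)) : Set (Euc d) :=
  {c | F = {x | x ∈ P ∧ ∀ y ∈ P, (inner ℝ c y : ℝ) ≤ inner ℝ c x}}

lemma pdim_eq {d : ℕ} (A : Set (Euc d)) : pdim A = finrank ℝ ↥(vectorSpan ℝ A) := by
  rw [pdim, direction_affineSpan]

/-- If a face `F = F₁ + ⋯ + F_r` of a Minkowski sum has an exact decomposition,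
then every tuple of faces `Gᵢ ⊆ Fᵢ` sums to a face of `F`, and the
decomposition of every face of `F` is exact. -/
theorem exact_decomposition_subfaces (d r : ℕ) (P F : Fin r → Set (Euc d))
    (hP : ∀ i, IsPolytope (P i)) (hF : ∀ i, IsFaceOf (P i) (F i))
    (Fs : Set (Euc d)) (hFs : Fs = ∑ i, F i)
    (hface : IsFaceOf (∑ i, P i) Fs)
    (hexact : pdim Fs = ∑ i, pdim (F i)) :
    (∀ G : Fin r → Set (Euc d), (∀ i, IsFaceOf (F i) (G i)) →
      IsFaceOf Fs (∑ i, G i)) ∧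
    (∀ H : Set (Euc d), IsFaceOf Fs H →
      ∀ G : Fin r → Set (Euc d), (∀ i, IsFaceOf (P i) (G i)) → H = ∑ i, G i →
        pdim H = ∑ i, pdim (G i)) := by
  classical
  have hPc : ∀ i, IsCompact (P i) := by
    intro i
    obtain ⟨V, hV⟩ := hP i
    rw [hV]
    exact V.finite_toSet.isCompact_convexHull ℝ
  have hPconv : ∀ i, Convex ℝ (P i) := by
    intro i
    obtain ⟨V, hV⟩ := hP i
    rw [hV]
    exact convex_convexHull ℝ _
  have hFne : ∀ i, (F i).Nonempty := fun i => (hF i).1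
  have hFsub : ∀ i, F i ⊆ P i := fun i => (hF i).2.subset
  have hPne : ∀ i, (P i).Nonempty := fun i => ⟨(hFne i).some, hFsub i (hFne i).some_mem⟩
  have hFc : ∀ i, IsCompact (F i) := fun i => (hF i).2.isCompact (hPc i)
  have hFconv : ∀ i, Convex ℝ (F i) := fun i => (hF i).2.convex (hPconv i)
  have hex' : finrank ℝ ↥(vectorSpan ℝ (∑ i, F i)) =
      ∑ i, finrank ℝ ↥(vectorSpan ℝ (F i)) := by
    have := hexact
    rw [hFs] at this
    simpa only [pdim_eq] using this
  constructor
  · -- Claim 1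
    intro G hG
    refine ⟨sum_nonempty Finset.univ G (fun i _ => (hG i).1), ?_⟩
    intro _
    obtain ⟨l, hl⟩ := exists_exposing Finset.univ F G (fun i _ => hFne i)
      (fun i _ => (hG i).1) (fun i _ => (hG i).2) hex'
    refine ⟨l, ?_⟩
    rw [hFs]
    exact hl.symm
  · -- Claim 2
    intro H hH G hG hHG
    obtain ⟨l₀, hl₀⟩ := hface.2 hface.1
    have hl₀' : Fs = l₀.toExposed (∑ i, P i) := hl₀
    set A : Fin r → Set (Euc d) := fun i => l₀.toExposed (P i) with hA
    have hAne : ∀ i, (A i).Nonempty := by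
      intro i
      obtain ⟨x, hx, hmax⟩ := (hPc i).exists_isMaxOn (hPne i) l₀.continuous.continuousOn
      exact ⟨x, hx, fun y hy => hmax hy⟩
    have hsubF : (∑ i, F i) ⊆ l₀.toExposed (∑ i, P i) := by
      rw [← hFs, hl₀']
    have hFA : ∀ i, F i ⊆ A i := fun i =>
      comp_subset_toExposed Finset.univ F P l₀ (fun j _ => hFsub j) (fun j _ => hFne j)
        hsubF i (Finset.mem_univ i)
    have hsumA : (∑ i, F i) = ∑ i, A i := by
      rw [← toExposed_sum l₀ Finset.univ P (fun i _ => hAne i), ← hl₀', hFs]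
    have hFAeq : ∀ i, F i = A i := by
      intro i
      exact cancellation Finset.univ F A (fun j _ => hFc j) (fun j _ => hFne j)
        (fun j _ => hFconv j)
        (fun j _ => (ContinuousLinearMap.toExposed.isExposed).isCompact (hPc j))
        (fun j _ => hAne j) (fun j _ => hFA j) hsumA i (Finset.mem_univ i)
    have hGsub : ∀ i, G i ⊆ P i := fun i => (hG i).2.subset
    have hGne : ∀ i, (G i).Nonempty := fun i => (hG i).1
    have hsubG : (∑ i, G i) ⊆ l₀.toExposed (∑ i, P i) := by
      rw [← hHG, ← hl₀']
      exact hH.2.subset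
    have hGA : ∀ i, G i ⊆ A i := fun i =>
      comp_subset_toExposed Finset.univ G P l₀ (fun j _ => hGsub j) (fun j _ => hGne j)
        hsubG i (Finset.mem_univ i)
    have hGF : ∀ i, G i ⊆ F i := fun i => (hFAeq i) ▸ hGA i
    have hsubfam := exact_subfamily Finset.univ (fun i => vectorSpan ℝ (G i))
      (fun i => vectorSpan ℝ (F i)) (fun i _ => vectorSpan_mono ℝ (hGF i))
      (by rw [← vectorSpan_sum Finset.univ F (fun i _ => hFne i)]; exact hex')
    rw [pdim_eq, hHG, vectorSpan_sum Finset.univ G (fun i _ => hGne i), hsubfam]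
    exact Finset.sum_congr rfl (fun i _ => (pdim_eq (G i)).symm)
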